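/- arXiv:1703.09011 — 2 statements merged into one kernel-verified Lean document; each statement's English description precedes it below -/
import Mathlib

section
/- Fix an integer b ≥ 2 and set ζ_h = ∑_{j≥h} (b−1)² / ((b^j − 1)(b^{j+1} − 1)). Then for each h ≥ 1: ((b−1)/(b+1))·(b^{1−2h} + b^{1−3h}) < ζ_h < (1 + 1/(b^h − 1))·(1 + 1/(b^{h+1} − 1))·((b−1)/(b+1))·b^{1−2h}. -/
/-- `ζ_h = ∑_{j ≥ h} (b−1)² / ((b^j − 1)(b^{j+1} − 1))`, written as a sum over `j = h + i`. -/
noncomputable def zeta (b h : ℕ) : ℝ :=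
  ∑' i : ℕ, ((b : ℝ) - 1) ^ 2 / (((b : ℝ) ^ (h + i) - 1) * ((b : ℝ) ^ (h + i + 1) - 1))

set_option maxHeartbeats 1600000 in
/-- For each `h ≥ 1`,
`((b−1)/(b+1))·(b^{1−2h} + b^{1−3h}) < ζ_h <
 (1 + 1/(b^h − 1))·(1 + 1/(b^{h+1} − 1))·((b−1)/(b+1))·b^{1−2h}`. -/
theorem stmt5 (b : ℕ) (hb : 2 ≤ b) (h : ℕ) (hh : 1 ≤ h) :
    (((b : ℝ) - 1) / ((b : ℝ) + 1)) *
        ((b : ℝ) ^ (1 - 2 * (h : ℤ)) + (b : ℝ) ^ (1 - 3 * (h : ℤ))) < zeta b h ∧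
    zeta b h < (1 + 1 / ((b : ℝ) ^ h - 1)) * (1 + 1 / ((b : ℝ) ^ (h + 1) - 1)) *
        (((b : ℝ) - 1) / ((b : ℝ) + 1)) * (b : ℝ) ^ (1 - 2 * (h : ℤ)) := by
  have hB2 : (2 : ℝ) ≤ (b : ℝ) := by exact_mod_cast hb
  set B : ℝ := (b : ℝ) with hBdef
  have hB1 : 1 < B := by linarith
  have hB0 : 0 < B := by linarith
  have hBne : B ≠ 0 := ne_of_gt hB0
  set x : ℝ := B ^ h with hxdef
  have hx1 : 1 < x := one_lt_pow₀ hB1 (by omega)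
  have hx0 : 0 < x := by linarith
  have hxne : x ≠ 0 := ne_of_gt hx0
  have hx2 : (2 : ℝ) ≤ x := by
    rw [hxdef]
    calc (2 : ℝ) ≤ B := hB2
      _ = B ^ 1 := (pow_one B).symm
      _ ≤ B ^ h := pow_le_pow_right₀ hB1.le hh
  -- the terms
  set f : ℕ → ℝ := fun i => (B - 1) ^ 2 / ((B ^ (h + i) - 1) * (B ^ (h + i + 1) - 1)) with hfdef
  have hzeta : zeta b h = ∑' i, f i := rfl
  clear_value B x f
  have hz1 : ∀ i : ℕ, (1 : ℝ) ≤ B ^ i := fun i => one_le_pow₀ hB1.le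
  have hzpos : ∀ i : ℕ, (0 : ℝ) < B ^ i := fun i => pow_pos hB0 i
  have hpowadd : ∀ i : ℕ, B ^ (h + i) = x * B ^ i := by
    intro i; rw [hxdef]; exact pow_add B h i
  have hpowadd1 : ∀ i : ℕ, B ^ (h + i + 1) = x * B ^ i * B := by
    intro i; rw [pow_succ, hpowadd]
  have hfnn : ∀ i, 0 ≤ f i := by
    intro i
    have h1 : 1 < B ^ (h + i) := one_lt_pow₀ hB1 (by omega)
    have h2 : 1 < B ^ (h + i + 1) := one_lt_pow₀ hB1 (by omega)
    have hp : (0:ℝ) < (B ^ (h + i) - 1) * (B ^ (h + i + 1) - 1) := by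
      have e1 : (0:ℝ) < B ^ (h + i) - 1 := by linarith
      have e2 : (0:ℝ) < B ^ (h + i + 1) - 1 := by linarith
      exact mul_pos e1 e2
    rw [hfdef]
    exact div_nonneg (by positivity) hp.le
  -- geometric ratios
  have hr2nn : (0 : ℝ) ≤ (B ^ 2)⁻¹ := by positivity
  have hr2lt : (B ^ 2)⁻¹ < 1 := by
    rw [inv_lt_one_iff₀]; right; nlinarith
  have hr3nn : (0 : ℝ) ≤ (B ^ 3)⁻¹ := by positivity
  have hr3lt : (B ^ 3)⁻¹ < 1 := by
    rw [inv_lt_one_iff₀]; right; nlinarith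
  have hr2i : ∀ i : ℕ, ((B ^ 2)⁻¹) ^ i = ((B ^ i) ^ 2)⁻¹ := by
    intro i; rw [inv_pow, pow_right_comm]
  have hr3i : ∀ i : ℕ, ((B ^ 3)⁻¹) ^ i = ((B ^ i) ^ 3)⁻¹ := by
    intro i; rw [inv_pow, pow_right_comm]
  have hxB1 : 1 < x * B := by nlinarith
  have hx1ne : x - 1 ≠ 0 := by linarith
  have hxB1ne : x * B - 1 ≠ 0 := by linarith
  have hxB10 : (0 : ℝ) < (x - 1) * (x * B - 1) := mul_pos (by linarith) (by linarith)
  -- zpow rewriting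
  have hzp2 : B ^ (1 - 2 * (h : ℤ)) = B / x ^ 2 := by
    rw [zpow_sub₀ hBne, zpow_one]
    congr 1
    rw [hxdef, show (2 * (h : ℤ)) = ((2 * h : ℕ) : ℤ) by push_cast; ring, zpow_natCast, pow_mul']
  have hzp3 : B ^ (1 - 3 * (h : ℤ)) = B / x ^ 3 := by
    rw [zpow_sub₀ hBne, zpow_one]
    congr 1
    rw [hxdef, show (3 * (h : ℤ)) = ((3 * h : ℕ) : ℤ) by push_cast; ring, zpow_natCast, pow_mul']
  -- upper-bound majorant
  set D : ℝ := (B - 1) ^ 2 / ((x - 1) * (x * B - 1)) with hDdef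
  set u : ℕ → ℝ := fun i => D * ((B ^ 2)⁻¹) ^ i with hudef
  clear_value D u
  have hu : Summable u := by
    rw [hudef]; exact (summable_geometric_of_lt_one hr2nn hr2lt).mul_left D
  have hfu : ∀ i, f i ≤ u i := by
    intro i
    set z : ℝ := B ^ i with hzdef
    clear_value z
    have hz1' : (1 : ℝ) ≤ z := hzdef ▸ hz1 i
    have hz0 : (0 : ℝ) < z := hzdef ▸ hzpos i
    have eui : u i = (B - 1) ^ 2 / ((x - 1) * (x * B - 1) * z ^ 2) := by
      simp only [hudef, hDdef, hr2i, ← hzdef]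
      rw [← div_eq_mul_inv, div_div]
    have efi : f i = (B - 1) ^ 2 / ((x * z - 1) * (x * z * B - 1)) := by
      simp only [hfdef, hpowadd, hpowadd1, ← hzdef]
    rw [eui, efi]
    have hd2 : (0 : ℝ) < (x - 1) * (x * B - 1) * z ^ 2 := by positivity
    have hd1 : (0 : ℝ) < (x * z - 1) * (x * z * B - 1) := by
      have : 1 < x * z := by nlinarith
      exact mul_pos (by linarith) (by nlinarith)
    rw [div_le_div_iff₀ hd1 hd2]
    have key : (x - 1) * (x * B - 1) * z ^ 2 ≤ (x * z - 1) * (x * z * B - 1) := by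
      have h1 : (x - 1) * z ≤ x * z - 1 := by nlinarith
      have h2 : (x * B - 1) * z ≤ x * z * B - 1 := by nlinarith
      calc (x - 1) * (x * B - 1) * z ^ 2 = ((x - 1) * z) * ((x * B - 1) * z) := by ring
        _ ≤ (x * z - 1) * (x * z * B - 1) :=
          mul_le_mul h1 h2 (by nlinarith) (by nlinarith)
    nlinarith [sq_nonneg (B - 1)]
  have hfsum : Summable f := Summable.of_nonneg_of_le hfnn hfu hu
  constructor
  · -- LOWER BOUND
    set A1 : ℝ := (B - 1) ^ 2 / (x ^ 2 * B) with hA1def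
    set A2 : ℝ := (B - 1) ^ 2 * (B + 1) / (x ^ 3 * B ^ 2) with hA2def
    set g : ℕ → ℝ := fun i => A1 * ((B ^ 2)⁻¹) ^ i + A2 * ((B ^ 3)⁻¹) ^ i with hgdef
    clear_value A1 A2 g
    have hg1 : Summable fun i : ℕ => A1 * ((B ^ 2)⁻¹) ^ i :=
      (summable_geometric_of_lt_one hr2nn hr2lt).mul_left A1
    have hg2 : Summable fun i : ℕ => A2 * ((B ^ 3)⁻¹) ^ i :=
      (summable_geometric_of_lt_one hr3nn hr3lt).mul_left A2
    have hgsum : Summable g := by rw [hgdef]; exact hg1.add hg2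
    have hgf : ∀ i, g i ≤ f i := by
      intro i
      set z : ℝ := B ^ i with hzdef
      clear_value z
      have hz1' : (1 : ℝ) ≤ z := hzdef ▸ hz1 i
      have hz0 : (0 : ℝ) < z := hzdef ▸ hzpos i
      have hzne : z ≠ 0 := ne_of_gt hz0
      have hy2 : (2 : ℝ) ≤ x * z := by nlinarith [mul_le_mul_of_nonneg_left hz1' (le_of_lt hx0)]
      have egi : g i = (B - 1) ^ 2 * ((x * z) * B + B + 1) / ((x * z) ^ 3 * B ^ 2) := by
        simp only [hgdef, hA1def, hA2def, hr2i, hr3i, ← hzdef]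
        field_simp
        ring
      have efi : f i = (B - 1) ^ 2 / ((x * z - 1) * (x * z * B - 1)) := by
        simp only [hfdef, hpowadd, hpowadd1, ← hzdef]
      rw [egi, efi]
      set y : ℝ := x * z with hydef
      clear_value y
      have hd1 : (0 : ℝ) < y ^ 3 * B ^ 2 := by positivity
      have hd2 : (0 : ℝ) < (y - 1) * (y * B - 1) := by
        exact mul_pos (by linarith) (by nlinarith)
      rw [div_le_div_iff₀ hd1 hd2]
      -- (B-1)^2 * (y*B+B+1) * ((y-1)*(y*B-1)) ≤ (B-1)^2 * (y^3*B^2)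
      have key : (y * B + B + 1) * ((y - 1) * (y * B - 1)) ≤ y ^ 3 * B ^ 2 := by
        nlinarith [mul_nonneg (by linarith : (0:ℝ) ≤ y - 1) hB0.le,
          mul_nonneg (mul_nonneg (by linarith : (0:ℝ) ≤ y - 1) hB0.le) hB0.le]
      nlinarith [mul_le_mul_of_nonneg_left key (sq_nonneg (B - 1))]
    have hgle : ∑' i, g i ≤ ∑' i, f i := Summable.tsum_le_tsum hgf hgsum hfsum
    have htg : ∑' i, g i = A1 * (1 - (B ^ 2)⁻¹)⁻¹ + A2 * (1 - (B ^ 3)⁻¹)⁻¹ := by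
      rw [hgdef, Summable.tsum_add hg1 hg2, tsum_mul_left, tsum_mul_left,
        tsum_geometric_of_lt_one hr2nn hr2lt, tsum_geometric_of_lt_one hr3nn hr3lt]
    have hB21 : B ^ 2 - 1 ≠ 0 := by nlinarith
    have hB31 : B ^ 3 - 1 ≠ 0 := by nlinarith
    have hBp1 : B + 1 ≠ 0 := by linarith
    have e1 : A1 * (1 - (B ^ 2)⁻¹)⁻¹ = (B - 1) * B / (x ^ 2 * (B + 1)) := by
      rw [hA1def]
      rw [show (1 - (B ^ 2)⁻¹) = (B ^ 2 - 1) / B ^ 2 by field_simp]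
      rw [show ((B ^ 2 - 1) / B ^ 2)⁻¹ = B ^ 2 / (B ^ 2 - 1) by rw [inv_div]]
      have hB21' : (0 : ℝ) < B ^ 2 - 1 := by nlinarith
      rw [div_mul_div_comm,
        div_eq_div_iff (mul_pos (by positivity : (0:ℝ) < x ^ 2 * B) hB21').ne'
          (mul_pos (pow_pos hx0 2) (by linarith : (0:ℝ) < B + 1)).ne']
      ring
    have e2 : A2 * (1 - (B ^ 3)⁻¹)⁻¹ = (B - 1) * (B + 1) * B / (x ^ 3 * (B ^ 2 + B + 1)) := by
      rw [hA2def]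
      rw [show (1 - (B ^ 3)⁻¹) = (B ^ 3 - 1) / B ^ 3 by field_simp]
      rw [show ((B ^ 3 - 1) / B ^ 3)⁻¹ = B ^ 3 / (B ^ 3 - 1) by rw [inv_div]]
      have hq : (0 : ℝ) < B ^ 2 + B + 1 := by positivity
      have hB31' : (0 : ℝ) < B ^ 3 - 1 := by nlinarith
      rw [div_mul_div_comm,
        div_eq_div_iff (mul_pos (by positivity : (0:ℝ) < x ^ 3 * B ^ 2) hB31').ne'
          (mul_pos (pow_pos hx0 3) hq).ne']
      ring
    have e3 : (B - 1) / (B + 1) * (B / x ^ 2 + B / x ^ 3)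
        = (B - 1) * B / (x ^ 2 * (B + 1)) + (B - 1) * B / (x ^ 3 * (B + 1)) := by
      field_simp
    have hstrict : (B - 1) * B / (x ^ 3 * (B + 1))
        < (B - 1) * (B + 1) * B / (x ^ 3 * (B ^ 2 + B + 1)) := by
      have hq : (0 : ℝ) < B ^ 2 + B + 1 := by nlinarith
      rw [div_lt_div_iff₀ (mul_pos (pow_pos hx0 3) (by linarith : (0:ℝ) < B + 1))
        (mul_pos (pow_pos hx0 3) hq)]
      have hP : (0 : ℝ) < (B - 1) * B * x ^ 3 :=
        mul_pos (mul_pos (by linarith) hB0) (pow_pos hx0 3)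
      nlinarith [mul_pos hP hB0]
    calc (B - 1) / (B + 1) * (B ^ (1 - 2 * (h : ℤ)) + B ^ (1 - 3 * (h : ℤ)))
        = (B - 1) * B / (x ^ 2 * (B + 1)) + (B - 1) * B / (x ^ 3 * (B + 1)) := by
          rw [hzp2, hzp3, e3]
      _ < A1 * (1 - (B ^ 2)⁻¹)⁻¹ + A2 * (1 - (B ^ 3)⁻¹)⁻¹ := by
          rw [e1, e2]; linarith
      _ = ∑' i, g i := htg.symm
      _ ≤ ∑' i, f i := hgle
      _ = zeta b h := hzeta.symm
  · -- UPPER BOUND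
    have hstrict : f 1 < u 1 := by
      have efi : f 1 = (B - 1) ^ 2 / ((x * B - 1) * (x * B * B - 1)) := by
        simp only [hfdef, hpowadd, hpowadd1, pow_one]
      have eui : u 1 = (B - 1) ^ 2 / ((x - 1) * (x * B - 1) * B ^ 2) := by
        simp only [hudef, hDdef, hr2i, pow_one]
        rw [← div_eq_mul_inv, div_div]
      rw [efi, eui]
      have hd1 : (0 : ℝ) < (x * B - 1) * (x * B * B - 1) := by
        exact mul_pos (by linarith) (by nlinarith)
      have hd2 : (0 : ℝ) < (x - 1) * (x * B - 1) * B ^ 2 := by positivity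
      rw [div_lt_div_iff₀ hd1 hd2]
      have key : (x - 1) * (x * B - 1) * B ^ 2 < (x * B - 1) * (x * B * B - 1) := by
        have h1 : (x - 1) * B < x * B - 1 := by nlinarith
        have h2 : (x * B - 1) * B < x * B * B - 1 := by nlinarith
        calc (x - 1) * (x * B - 1) * B ^ 2 = ((x - 1) * B) * ((x * B - 1) * B) := by ring
          _ < (x * B - 1) * (x * B * B - 1) := by
            apply mul_lt_mul' h1.le h2 (by nlinarith) (by linarith)
      nlinarith [sq_nonneg (B - 1), mul_lt_mul_of_pos_left key (by nlinarith : (0:ℝ) < (B - 1) ^ 2)]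
    have hlt : ∑' i, f i < ∑' i, u i := Summable.tsum_lt_tsum hfu hstrict hfsum hu
    have htu : ∑' i, u i = D * (1 - (B ^ 2)⁻¹)⁻¹ := by
      rw [hudef, tsum_mul_left, tsum_geometric_of_lt_one hr2nn hr2lt]
    have hB21 : B ^ 2 - 1 ≠ 0 := by nlinarith
    have erhs : D * (1 - (B ^ 2)⁻¹)⁻¹
        = (1 + 1 / (x - 1)) * (1 + 1 / (x * B - 1)) * ((B - 1) / (B + 1)) * (B / x ^ 2) := by
      rw [hDdef]
      rw [show (1 - (B ^ 2)⁻¹) = (B ^ 2 - 1) / B ^ 2 by field_simp]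
      rw [show ((B ^ 2 - 1) / B ^ 2)⁻¹ = B ^ 2 / (B ^ 2 - 1) by rw [inv_div]]
      rw [show (1 + 1 / (x - 1)) = x / (x - 1) by field_simp; ring,
        show (1 + 1 / (x * B - 1)) = x * B / (x * B - 1) by field_simp; ring]
      have hBp1 : B + 1 ≠ 0 := by linarith
      rw [show B ^ 2 - 1 = (B - 1) * (B + 1) by ring]
      field_simp
    have hxB : B ^ (h + 1) = x * B := by rw [pow_succ, ← hxdef]
    rw [hzeta, hxB, hzp2]
    calc ∑' i, f i < ∑' i, u i := hlt
      _ = (1 + 1 / (x - 1)) * (1 + 1 / (x * B - 1)) * ((B - 1) / (B + 1)) * (B / x ^ 2) := by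
          rw [htu, erhs]
end

section
/- Fix an integer b ≥ 2, let ζ_h = ∑_{j≥h} (b−1)²/((b^j−1)(b^{j+1}−1)), and define Ξ_k = (b−1)·b^k·∑_{h>k} b^{h−1}·ζ_h for k ≥ 0. Then (Ξ_k) is strictly decreasing in k and lim_{k→∞} Ξ_k = (b−1)/(b+1). -/
open Filter

noncomputable def auxT (b j : ℕ) : ℝ :=
  ((b : ℝ) - 1) ^ 2 / (((b : ℝ) ^ j - 1) * ((b : ℝ) ^ (j + 1) - 1))

section basic
variable {b : ℕ} (hb : 2 ≤ b)
include hb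

lemma hBtwo : (2 : ℝ) ≤ (b : ℝ) := by exact_mod_cast hb

lemma hBone : (1 : ℝ) < (b : ℝ) := by
  have := hBtwo hb; linarith

lemma pow_two_le {j : ℕ} (hj : j ≠ 0) : (2 : ℝ) ≤ (b : ℝ) ^ j := by
  calc (2:ℝ) ≤ (b:ℝ) := hBtwo hb
  _ ≤ (b:ℝ)^j := le_self_pow₀ (by linarith [hBtwo hb]) hj

lemma pow_sub_one_pos {j : ℕ} (hj : j ≠ 0) : 0 < (b : ℝ) ^ j - 1 := by
  linarith [pow_two_le hb hj]

lemma auxT_pos {j : ℕ} (hj : j ≠ 0) : 0 < auxT b j := by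
  have h1 := pow_sub_one_pos hb hj
  have h2 := pow_sub_one_pos hb (Nat.succ_ne_zero j)
  have h3 : (0:ℝ) < ((b:ℝ) - 1)^2 := by
    have h := hBone hb; nlinarith
  exact div_pos h3 (mul_pos h1 h2)

lemma auxT_nonneg (j : ℕ) : 0 ≤ auxT b j := by
  have h1 : (1:ℝ) ≤ (b:ℝ) := (hBone hb).le
  apply div_nonneg (by positivity)
  have hx : ∀ m : ℕ, (0:ℝ) ≤ (b:ℝ)^m - 1 := fun m => by
    have := one_le_pow₀ h1 (n := m)
    linarith
  exact mul_nonneg (hx j) (hx (j+1))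

lemma auxT_le {j : ℕ} (hj : j ≠ 0) :
    auxT b j ≤ 4 * ((b : ℝ) - 1) ^ 2 * (((b : ℝ) ^ 2)⁻¹) ^ j := by
  have hB := hBtwo hb
  have h2j : (2:ℝ) ≤ (b:ℝ)^j := pow_two_le hb hj
  have h2j1 : (2:ℝ) ≤ (b:ℝ)^(j+1) := pow_two_le hb (Nat.succ_ne_zero j)
  have hposj : (0:ℝ) < (b:ℝ)^j := by linarith
  have hd : (b:ℝ)^j * (b:ℝ)^j / 4 ≤ ((b:ℝ)^j - 1) * ((b:ℝ)^(j+1) - 1) := by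
    have h1 : (b:ℝ)^j / 2 ≤ (b:ℝ)^j - 1 := by linarith
    have h2 : (b:ℝ)^(j+1) / 2 ≤ (b:ℝ)^(j+1) - 1 := by linarith
    have h3 : (b:ℝ)^j ≤ (b:ℝ)^(j+1) := by
      rw [pow_succ]; nlinarith
    nlinarith
  have hdpos : (0:ℝ) < (b:ℝ)^j * (b:ℝ)^j / 4 := by positivity
  have hnum : (0:ℝ) ≤ ((b:ℝ) - 1)^2 := by positivity
  calc auxT b j ≤ ((b:ℝ) - 1)^2 / ((b:ℝ)^j * (b:ℝ)^j / 4) :=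
        div_le_div_of_nonneg_left hnum hdpos hd  -- check name/signature
    _ = 4 * ((b : ℝ) - 1) ^ 2 * (((b : ℝ) ^ 2)⁻¹) ^ j := by
        rw [inv_pow, ← pow_mul]
        rw [show 2 * j = j + j by ring, pow_add]
        field_simp

end basic

lemma zeta_eq (b h : ℕ) : zeta b h = ∑' m : ℕ, auxT b (h + m) := rfl

section summ
variable {b : ℕ} (hb : 2 ≤ b)
include hb

lemma hr_mem : (0:ℝ) ≤ (((b:ℝ)^2)⁻¹) ∧ (((b:ℝ)^2)⁻¹) < 1 := by
  have hB := hBtwo hb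
  constructor
  · positivity
  · rw [inv_lt_one₀ (by positivity)]; nlinarith

lemma summable_auxT (h : ℕ) : Summable fun m : ℕ => auxT b (h + m) := by
  set r := (((b:ℝ)^2)⁻¹) with hr
  obtain ⟨hr0, hr1⟩ := hr_mem hb
  apply Summable.of_nonneg_of_le (fun m => auxT_nonneg hb _)
    (f := fun m => (4 * ((b : ℝ) - 1) ^ 2 * r ^ h) * r ^ m)
  · intro m
    rcases Nat.eq_zero_or_pos (h + m) with h0 | hpos
    · obtain ⟨rfl, rfl⟩ := Nat.add_eq_zero.mp h0
      have : auxT b 0 = 0 := by simp [auxT]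
      rw [this]
      positivity
    · calc auxT b (h + m) ≤ 4 * ((b : ℝ) - 1) ^ 2 * r ^ (h + m) :=
            auxT_le hb (by omega)
        _ = (4 * ((b : ℝ) - 1) ^ 2 * r ^ h) * r ^ m := by rw [pow_add]; ring
  · exact (summable_geometric_of_lt_one hr0 hr1).mul_left _

lemma zeta_nonneg (h : ℕ) : 0 ≤ zeta b h := by
  rw [zeta_eq]
  exact tsum_nonneg fun m => auxT_nonneg hb _

lemma zeta_le (h : ℕ) :
    zeta b h ≤ (4 * ((b : ℝ) - 1) ^ 2 * (1 - ((b:ℝ)^2)⁻¹)⁻¹) * (((b:ℝ)^2)⁻¹) ^ h := by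
  set r := (((b:ℝ)^2)⁻¹) with hr
  obtain ⟨hr0, hr1⟩ := hr_mem hb
  rw [zeta_eq]
  have h1 : ∑' m : ℕ, (4 * ((b : ℝ) - 1) ^ 2 * r ^ h) * r ^ m
      = (4 * ((b : ℝ) - 1) ^ 2 * (1 - r)⁻¹) * r ^ h := by
    rw [tsum_mul_left, tsum_geometric_of_lt_one hr0 hr1]; ring
  rw [← h1]
  apply Summable.tsum_le_tsum _ (summable_auxT hb h)
    ((summable_geometric_of_lt_one hr0 hr1).mul_left _)
  intro m
  rcases Nat.eq_zero_or_pos (h + m) with h0 | hpos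
  · obtain ⟨rfl, rfl⟩ := Nat.add_eq_zero.mp h0
    have : auxT b 0 = 0 := by simp [auxT]
    rw [this]
    positivity
  · calc auxT b (h + m) ≤ 4 * ((b : ℝ) - 1) ^ 2 * r ^ (h + m) := auxT_le hb (by omega)
      _ = (4 * ((b : ℝ) - 1) ^ 2 * r ^ h) * r ^ m := by rw [pow_add]; ring

lemma summable_inner (k : ℕ) :
    Summable fun i : ℕ => (b:ℝ) ^ (k + i) * zeta b (k + 1 + i) := by
  have hB := hBtwo hb
  set r := (((b:ℝ)^2)⁻¹) with hr
  obtain ⟨hr0, hr1⟩ := hr_mem hb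
  set D : ℝ := 4 * ((b : ℝ) - 1) ^ 2 * (1 - r)⁻¹ with hD
  have hD0 : 0 ≤ D := by
    have : (0:ℝ) < 1 - r := by linarith
    positivity
  apply Summable.of_nonneg_of_le
    (fun i => mul_nonneg (by positivity) (zeta_nonneg hb _))
    (f := fun i => ((b:ℝ)^k * D * r^(k+1)) * ((b:ℝ)⁻¹) ^ i)
  · intro i
    calc (b:ℝ) ^ (k + i) * zeta b (k + 1 + i)
        ≤ (b:ℝ) ^ (k + i) * (D * r ^ (k + 1 + i)) := by
          apply mul_le_mul_of_nonneg_left (zeta_le hb _) (by positivity)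
      _ = ((b:ℝ)^k * D * r^(k+1)) * (((b:ℝ) * r) ^ i) := by
          rw [pow_add, pow_add, mul_pow]; ring
      _ = ((b:ℝ)^k * D * r^(k+1)) * ((b:ℝ)⁻¹) ^ i := by
          have : (b:ℝ) * r = (b:ℝ)⁻¹ := by
            rw [hr]; field_simp
          rw [this]
  · apply Summable.mul_left
    apply summable_geometric_of_lt_one (by positivity)
    rw [inv_lt_one₀ (by positivity)]; linarith
end summ

/-- Diagonal reindexing of a summable double series. -/
lemma antidiag_swap (F : ℕ × ℕ → ℝ) (h : Summable F) :
    Summable (fun n => ∑ kl ∈ Finset.HasAntidiagonal.antidiagonal n, F kl) ∧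
      ∑' p : ℕ × ℕ, F p = ∑' n : ℕ, ∑ kl ∈ Finset.HasAntidiagonal.antidiagonal n, F kl := by
  have h' : Summable fun x : Σ n : ℕ, Finset.HasAntidiagonal.antidiagonal n => F x.2 :=
    Finset.HasAntidiagonal.sigmaAntidiagonalEquivProd.summable_iff.mpr h
  constructor
  · conv => congr; ext; rw [← Finset.sum_finset_coe, ← tsum_fintype (L := SummationFilter.unconditional _)]
    exact h'.sigma' fun n => (hasSum_fintype _).summable
  · conv_rhs => congr; ext; rw [← Finset.sum_finset_coe, ← tsum_fintype (L := SummationFilter.unconditional _)]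
    rw [← Finset.HasAntidiagonal.sigmaAntidiagonalEquivProd.tsum_eq F]
    exact h'.tsum_sigma' (fun n => (hasSum_fintype _).summable)

/-- `Ξ_k = (b−1)·b^k·∑_{h > k} b^{h−1}·ζ_h`, written as a sum over `h = k + 1 + i`. -/
noncomputable def Xi (b k : ℕ) : ℝ :=
  ((b : ℝ) - 1) * (b : ℝ) ^ k * ∑' i : ℕ, (b : ℝ) ^ (k + i) * zeta b (k + 1 + i)

noncomputable def auxG (b k n : ℕ) : ℝ :=
  (b:ℝ) ^ (2*k) * ((b:ℝ) ^ (n+1) - 1) * auxT b (k+1+n)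

section repr
variable {b : ℕ} (hb : 2 ≤ b)
include hb

lemma xi_repr (k : ℕ) : Summable (auxG b k) ∧ Xi b k = ∑' n, auxG b k n := by
  have hB := hBtwo hb
  set r := (((b:ℝ)^2)⁻¹) with hr
  obtain ⟨hr0, hr1⟩ := hr_mem hb
  set F : ℕ × ℕ → ℝ :=
    fun p => ((b:ℝ) - 1) * (b:ℝ) ^ (2*k + p.1) * auxT b (k + 1 + p.1 + p.2) with hF
  -- summability of F
  have hFs : Summable F := by
    set D : ℝ := ((b:ℝ) - 1) * (b:ℝ)^(2*k) * (4 * ((b : ℝ) - 1) ^ 2 * r^(k+1)) with hD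
    have hD0 : 0 ≤ D := mul_nonneg (mul_nonneg (by linarith) (by positivity)) (by positivity)
    have hgeo1 : Summable fun i : ℕ => D * ((b:ℝ)⁻¹) ^ i := by
      apply Summable.mul_left
      apply summable_geometric_of_lt_one (by positivity)
      rw [inv_lt_one₀ (by positivity)]; linarith
    have hgeo2 : Summable fun m : ℕ => r ^ m := summable_geometric_of_lt_one hr0 hr1
    apply Summable.of_nonneg_of_le
      (fun p => mul_nonneg (mul_nonneg (by linarith) (by positivity)) (auxT_nonneg hb _))
      (f := fun p : ℕ × ℕ => (D * ((b:ℝ)⁻¹) ^ p.1) * r ^ p.2)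
    · rintro ⟨i, m⟩
      calc ((b:ℝ) - 1) * (b:ℝ) ^ (2*k + i) * auxT b (k + 1 + i + m)
          ≤ ((b:ℝ) - 1) * (b:ℝ) ^ (2*k + i) * (4 * ((b : ℝ) - 1) ^ 2 * r ^ (k+1+i+m)) := by
            exact mul_le_mul_of_nonneg_left (auxT_le hb (by omega))
              (mul_nonneg (by linarith) (by positivity))
        _ = (D * (((b:ℝ) * r)) ^ i) * r ^ m := by
            rw [hD, pow_add, pow_add, pow_add, pow_add, mul_pow]; ring
        _ = (D * ((b:ℝ)⁻¹) ^ i) * r ^ m := by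
            have : (b:ℝ) * r = (b:ℝ)⁻¹ := by rw [hr]; field_simp
            rw [this]
    · exact hgeo1.mul_of_nonneg hgeo2 (fun i => by positivity) (fun m => by positivity)
  -- Xi = double tsum
  have hXiF : Xi b k = ∑' p : ℕ × ℕ, F p := by
    have hsumF : ∀ i : ℕ, (fun m => F (i, m)) = fun m =>
        (((b:ℝ) - 1) * (b:ℝ) ^ (2*k + i)) * auxT b ((k + 1 + i) + m) := by
      intro i; funext m; simp only [hF]
    have hinner : ∀ i : ℕ, ∑' m, F (i, m)
        = ((b:ℝ) - 1) * (b:ℝ) ^ k * ((b:ℝ) ^ (k + i) * zeta b (k + 1 + i)) := by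
      intro i
      rw [hsumF i, tsum_mul_left, ← zeta_eq]
      rw [show 2*k + i = k + (k + i) by ring, pow_add]
      ring
    rw [Xi, ← tsum_mul_left]
    rw [hFs.tsum_prod' fun i => by
      rw [hsumF i]
      exact (summable_auxT hb (k+1+i)).mul_left _]
    exact tsum_congr fun i => (hinner i).symm
  obtain ⟨hs, he⟩ := antidiag_swap F hFs
  -- identify the antidiagonal sums with auxG
  have hdiag : ∀ n : ℕ, ∑ kl ∈ Finset.HasAntidiagonal.antidiagonal n, F kl = auxG b k n := by
    intro n
    rw [Finset.Nat.sum_antidiagonal_eq_sum_range_succ_mk]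
    have : ∀ i ∈ Finset.range (n+1),
        F (i, n - i) = (((b:ℝ) - 1) * (b:ℝ)^(2*k) * auxT b (k+1+n)) * (b:ℝ)^i := by
      intro i hi
      have hin : i ≤ n := by simpa [Nat.lt_succ_iff] using hi
      simp only [hF]
      rw [show k + 1 + i + (n - i) = k + 1 + n by omega, pow_add]
      ring
    rw [Finset.sum_congr rfl this, ← Finset.mul_sum,
      geom_sum_eq (by intro h; rw [h] at hB; norm_num at hB) (n+1)]
    rw [auxG]
    have hb1 : (b:ℝ) - 1 ≠ 0 := by intro h; nlinarith [hBtwo hb]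
    field_simp
  constructor
  · exact (summable_congr fun n => (hdiag n)).mp hs
  · rw [hXiF, he]
    exact tsum_congr hdiag

end repr

section mono
variable {b : ℕ} (hb : 2 ≤ b)
include hb

lemma auxG_pos (k n : ℕ) : 0 < auxG b k n := by
  have hB := hBtwo hb
  have h1 : (0:ℝ) < (b:ℝ)^(2*k) := by positivity
  have h2 : (0:ℝ) < (b:ℝ)^(n+1) - 1 := pow_sub_one_pos hb (Nat.succ_ne_zero n)
  exact mul_pos (mul_pos h1 h2) (auxT_pos hb (by omega))

set_option maxHeartbeats 1000000 in
lemma auxG_succ_lt (k n : ℕ) : auxG b (k+1) n < auxG b k n := by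
  have hB := hBtwo hb
  have hd1 : (0:ℝ) < ((b:ℝ)^(k+1+n) - 1) * ((b:ℝ)^(k+1+n+1) - 1) :=
    mul_pos (pow_sub_one_pos hb (by omega)) (pow_sub_one_pos hb (by omega))
  have hd2 : (0:ℝ) < ((b:ℝ)^(k+1+1+n) - 1) * ((b:ℝ)^(k+1+1+n+1) - 1) :=
    mul_pos (pow_sub_one_pos hb (by omega)) (pow_sub_one_pos hb (by omega))
  have e1 : auxG b k n = ((b:ℝ)^(2*k) * ((b:ℝ)^(n+1) - 1) * ((b:ℝ) - 1)^2)
      / (((b:ℝ)^(k+1+n) - 1) * ((b:ℝ)^(k+1+n+1) - 1)) := by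
    rw [auxG, auxT]; ring
  have e2 : auxG b (k+1) n = ((b:ℝ)^(2*(k+1)) * ((b:ℝ)^(n+1) - 1) * ((b:ℝ) - 1)^2)
      / (((b:ℝ)^(k+1+1+n) - 1) * ((b:ℝ)^(k+1+1+n+1) - 1)) := by
    rw [auxG, auxT]; ring
  rw [e1, e2, div_lt_div_iff₀ hd2 hd1]
  have hx : (0:ℝ) < (b:ℝ)^k := by positivity
  have hy : (0:ℝ) < (b:ℝ)^n := by positivity
  have hx1 : (1:ℝ) ≤ (b:ℝ)^k := one_le_pow₀ (by linarith)
  have hy1 : (1:ℝ) ≤ (b:ℝ)^n := one_le_pow₀ (by linarith)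
  have p1 : (b:ℝ)^(2*k) = (b:ℝ)^k * (b:ℝ)^k := by
    rw [two_mul, pow_add]
  have p2 : (b:ℝ)^(2*(k+1)) = (b:ℝ)^k * (b:ℝ)^k * ((b:ℝ) * (b:ℝ)) := by
    rw [show 2*(k+1) = k + k + 2 by ring, pow_add, pow_add]; ring
  have p3 : (b:ℝ)^(n+1) = (b:ℝ)^n * (b:ℝ) := by rw [pow_add]; ring
  have p4 : (b:ℝ)^(k+1+n) = (b:ℝ)^k * (b:ℝ) * (b:ℝ)^n := by
    rw [pow_add, pow_add]; ring
  have p5 : (b:ℝ)^(k+1+n+1) = (b:ℝ)^k * (b:ℝ) * (b:ℝ) * (b:ℝ)^n := by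
    rw [pow_add, pow_add, pow_add]; ring
  have p6 : (b:ℝ)^(k+1+1+n) = (b:ℝ)^k * (b:ℝ) * (b:ℝ) * (b:ℝ)^n := by
    rw [pow_add, pow_add, pow_add]; ring
  have p7 : (b:ℝ)^(k+1+1+n+1) = (b:ℝ)^k * (b:ℝ) * (b:ℝ) * (b:ℝ) * (b:ℝ)^n := by
    rw [pow_add, pow_add, pow_add, pow_add]; ring
  rw [p2, p1, p3, p4, p5, p6, p7]
  set x := (b:ℝ)^k
  set y := (b:ℝ)^n
  set B := (b:ℝ)
  have hf1 : (0:ℝ) < y * B - 1 := by nlinarith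
  have hxy : (1:ℝ) ≤ x * y := by nlinarith
  have hf2 : (0:ℝ) < x * B * B * y - 1 := by nlinarith [hxy]
  have hf3 : (0:ℝ) < B^2 - 1 := by nlinarith
  have hprod : (0:ℝ) < x^2 * (y * B - 1) * ((B:ℝ) - 1)^2 * (x * B * B * y - 1) * (B^2 - 1) := by
    have hB1 : (0:ℝ) < (B - 1)^2 := by nlinarith
    positivity
  have hexp : x*x*(y*B-1)*((B-1)^2) * ((x*B*B*y-1)*(x*B*B*B*y-1))
      - x*x*(B*B)*(y*B-1)*((B-1)^2) * ((x*B*y-1)*(x*B*B*y-1))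
      = x^2 * (y * B - 1) * ((B:ℝ) - 1)^2 * (x * B * B * y - 1) * (B^2 - 1) := by ring
  linarith [hprod, hexp]
end mono

noncomputable def auxL (b n : ℕ) : ℝ :=
  ((b:ℝ) ^ (n+1) - 1) * ((b:ℝ) - 1)^2 * (((b:ℝ)^(1+n) * (b:ℝ)^(2+n)))⁻¹

section lim
variable {b : ℕ} (hb : 2 ≤ b)
include hb

lemma tendsto_auxG (n : ℕ) :
    Tendsto (fun k => auxG b k n) atTop (nhds (auxL b n)) := by
  have hB := hBtwo hb
  have hB0 : (0:ℝ) < (b:ℝ) := by linarith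
  have hinvle : ∀ k : ℕ, ((b:ℝ)⁻¹) ^ k ≤ 1 :=
    fun k => pow_le_one₀ (by positivity) (by rw [inv_le_one₀ hB0]; linarith)
  have hinvpos : ∀ k : ℕ, (0:ℝ) < ((b:ℝ)⁻¹) ^ k := fun k => by positivity
  have h1n : (2:ℝ) ≤ (b:ℝ)^(1+n) := pow_two_le hb (by omega)
  have h2n : (2:ℝ) ≤ (b:ℝ)^(2+n) := pow_two_le hb (by omega)
  have hrepr : ∀ k : ℕ, auxG b k n = ((b:ℝ) ^ (n+1) - 1) * ((b:ℝ) - 1)^2 *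
      (((b:ℝ)^(1+n) - ((b:ℝ)⁻¹)^k) * ((b:ℝ)^(2+n) - ((b:ℝ)⁻¹)^k))⁻¹ := by
    intro k
    have hd : (0:ℝ) < ((b:ℝ)^(k+1+n) - 1) * ((b:ℝ)^(k+1+n+1) - 1) :=
      mul_pos (pow_sub_one_pos hb (by omega)) (pow_sub_one_pos hb (by omega))
    have hbk : (0:ℝ) < (b:ℝ)^k := by positivity
    have hkey : ((b:ℝ)^(1+n) - ((b:ℝ)^k)⁻¹) * ((b:ℝ)^(2+n) - ((b:ℝ)^k)⁻¹)
        = (((b:ℝ)^(k+1+n) - 1) * ((b:ℝ)^(k+1+n+1) - 1)) / ((b:ℝ)^k * (b:ℝ)^k) := by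
      rw [eq_div_iff (by positivity)]
      field_simp
      ring
    rw [auxG, auxT, inv_pow, hkey, inv_div]
    rw [div_eq_mul_inv, div_eq_mul_inv, mul_inv]
    have h2k : (b:ℝ)^(2*k) = (b:ℝ)^k * (b:ℝ)^k := by rw [two_mul, pow_add]
    rw [h2k]
    ring
  simp only [hrepr]
  have h0 : Tendsto (fun k : ℕ => ((b:ℝ)⁻¹) ^ k) atTop (nhds 0) :=
    tendsto_pow_atTop_nhds_zero_of_lt_one (by positivity)
      (by rw [inv_lt_one₀ hB0]; linarith)
  have hne : ((b:ℝ)^(1+n) - 0) * ((b:ℝ)^(2+n) - 0) ≠ 0 := by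
    rw [sub_zero, sub_zero]; positivity
  have := ((h0.const_sub ((b:ℝ)^(1+n))).mul (h0.const_sub ((b:ℝ)^(2+n)))).inv₀ hne
  have h2 := this.const_mul (((b:ℝ) ^ (n+1) - 1) * ((b:ℝ) - 1)^2)
  simpa [auxL, mul_assoc] using h2

lemma summable_geo1 : Summable fun n : ℕ => (((b:ℝ) - 1)^2 / (b:ℝ)^2) * ((b:ℝ)⁻¹) ^ n := by
  have hB := hBtwo hb
  apply Summable.mul_left
  exact summable_geometric_of_lt_one (by positivity)
    (by rw [inv_lt_one₀ (by linarith)]; linarith)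

lemma summable_geo2 : Summable fun n : ℕ => (((b:ℝ) - 1)^2 / (b:ℝ)^3) * (((b:ℝ)^2)⁻¹) ^ n := by
  obtain ⟨hr0, hr1⟩ := hr_mem hb
  exact (summable_geometric_of_lt_one hr0 hr1).mul_left _

lemma auxL_eq : auxL b = fun n : ℕ =>
    (((b:ℝ) - 1)^2 / (b:ℝ)^2) * ((b:ℝ)⁻¹) ^ n
      - (((b:ℝ) - 1)^2 / (b:ℝ)^3) * (((b:ℝ)^2)⁻¹) ^ n := by
  have hB := hBtwo hb
  have hB0 : ((b:ℝ)) ≠ 0 := by positivity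
  funext n
  rw [auxL, inv_pow, inv_pow]
  have h1 : ((b:ℝ)^(1+n)) ≠ 0 := by positivity
  have h2 : ((b:ℝ)^(2+n)) ≠ 0 := by positivity
  have h3 : ((b:ℝ)^n) ≠ 0 := by positivity
  field_simp
  ring

lemma tsum_auxL : ∑' n, auxL b n = ((b:ℝ) - 1) / ((b:ℝ) + 1) := by
  have hB := hBtwo hb
  obtain ⟨hr0, hr1⟩ := hr_mem hb
  have hi0 : (0:ℝ) ≤ (b:ℝ)⁻¹ := by positivity
  have hi1 : ((b:ℝ))⁻¹ < 1 := by rw [inv_lt_one₀ (by linarith)]; linarith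
  rw [auxL_eq hb]
  rw [(summable_geo1 hb).tsum_sub (summable_geo2 hb), tsum_mul_left, tsum_mul_left,
    tsum_geometric_of_lt_one hi0 hi1, tsum_geometric_of_lt_one hr0 hr1]
  have hb1 : (b:ℝ) - 1 ≠ 0 := by intro h; nlinarith
  have hbp1 : (b:ℝ) + 1 ≠ 0 := by intro h; nlinarith
  have h1 : (1 - ((b:ℝ))⁻¹) ≠ 0 := by intro h; nlinarith [hi1]
  have h2 : (1 - ((b:ℝ)^2)⁻¹) ≠ 0 := by intro h; nlinarith [hr1]
  have hB0 : ((b:ℝ)) ≠ 0 := by positivity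
  have hsq : (b:ℝ)^2 - 1 ≠ 0 := by nlinarith
  have e1 : (1 - ((b:ℝ))⁻¹)⁻¹ = (b:ℝ)/((b:ℝ)-1) := by
    rw [eq_div_iff hb1]; field_simp
  have e2 : (1 - ((b:ℝ)^2)⁻¹)⁻¹ = (b:ℝ)^2/((b:ℝ)^2-1) := by
    rw [eq_div_iff hsq]; field_simp
  rw [e1, e2]
  field_simp
  ring

end lim

/-- `Ξ_k` is strictly decreasing in `k` and `Ξ_k → (b−1)/(b+1)` as `k → ∞`. -/
theorem stmt6 (b : ℕ) (hb : 2 ≤ b) :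
    StrictAnti (fun k : ℕ => Xi b k) ∧
    Tendsto (fun k : ℕ => Xi b k) atTop (nhds (((b : ℝ) - 1) / ((b : ℝ) + 1))) := by
  constructor
  · apply strictAnti_nat_of_succ_lt
    intro k
    show Xi b (k+1) < Xi b k
    rw [(xi_repr hb (k+1)).2, (xi_repr hb k).2]
    exact Summable.tsum_lt_tsum_of_nonneg (fun n => (auxG_pos hb (k+1) n).le)
      (fun n => (auxG_succ_lt hb k n).le) (auxG_succ_lt hb k 0) (xi_repr hb k).1
  · have he : (fun k : ℕ => Xi b k) = fun k => ∑' n, auxG b k n :=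
      funext fun k => (xi_repr hb k).2
    rw [he, ← tsum_auxL hb]
    apply tendsto_tsum_of_dominated_convergence (bound := auxG b 0) (xi_repr hb 0).1
      (fun n => tendsto_auxG hb n)
    apply Eventually.of_forall
    intro k n
    rw [Real.norm_eq_abs, abs_of_pos (auxG_pos hb k n)]
    exact (strictAnti_nat_of_succ_lt (f := fun j => auxG b j n) (fun j => auxG_succ_lt hb j n)).antitone (Nat.zero_le k)
end
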